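/- arXiv:2203.09081 — 4 statements merged into one kernel-verified Lean document; each statement's English description precedes it below -/
import Mathlib

section
/- Let W* = [w_1*,...,w_K*] be a fixed simplex ETF scaled so that w_k*^T w_{k'}* = E_W(K/(K-1) δ_{kk'} - 1/(K-1)). Then for any single feature h with label k, the minimizer of L_CE(h, W*) over the ball ||h||² ≤ E_H is unique and equals h* = √(E_H/E_W) w_k*, so that h*^T w_{k'}* = √(E_H E_W)(K/(K-1) δ_{kk'} - 1/(K-1)) for all k'. -/
open scoped BigOperators RealInnerProductSpace

noncomputable section

lemma jensen_exp {ι : Type*} (s : Finset ι) (a : ι → ℝ) (m : ℝ)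
    (hm : ∑ j ∈ s, a j = s.card * m) :
    (s.card : ℝ) * Real.exp m ≤ ∑ j ∈ s, Real.exp (a j) := by
  have h1 : ∑ j ∈ s, Real.exp m * (1 + (a j - m)) ≤ ∑ j ∈ s, Real.exp (a j) := by
    refine Finset.sum_le_sum fun j _ => ?_
    have h2 := Real.add_one_le_exp (a j - m)
    calc Real.exp m * (1 + (a j - m)) ≤ Real.exp m * Real.exp (a j - m) :=
          mul_le_mul_of_nonneg_left (by linarith) (Real.exp_pos m).le
      _ = Real.exp (a j) := by rw [← Real.exp_add]; ring_nf
  have h4 : ∑ j ∈ s, Real.exp m * (1 + (a j - m)) = (s.card : ℝ) * Real.exp m := by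
    rw [← Finset.mul_sum]
    have h5 : ∑ j ∈ s, (1 + (a j - m)) = (s.card : ℝ) := by
      rw [Finset.sum_add_distrib, Finset.sum_const, Finset.sum_sub_distrib,
        Finset.sum_const, hm]
      ring
    rw [h5]; ring
  linarith


theorem ce_etf_minimizer (d K : ℕ) (hK : 2 ≤ K) (hd : K ≤ d)
    (EW EH : ℝ) (hEW : 0 < EW) (hEH : 0 < EH)
    (w : Fin K → EuclideanSpace ℝ (Fin d))
    (hW : ∀ i j, ⟪w i, w j⟫ =
      EW * ((K : ℝ) / (K - 1) * (if i = j then 1 else 0) - 1 / (K - 1)))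
    (hWsum : ∑ i : Fin K, w i = 0)
    (k : Fin K)
    (L : EuclideanSpace ℝ (Fin d) → ℝ)
    (hL : ∀ h, L h =
      -Real.log (Real.exp ⟪h, w k⟫ / ∑ j : Fin K, Real.exp ⟪h, w j⟫))
    (hstar : EuclideanSpace ℝ (Fin d))
    (hhstar : hstar = Real.sqrt (EH / EW) • w k) :
    (∀ h : EuclideanSpace ℝ (Fin d), ‖h‖ ^ 2 ≤ EH → L hstar ≤ L h) ∧
    (∀ h : EuclideanSpace ℝ (Fin d), ‖h‖ ^ 2 ≤ EH → L h = L hstar → h = hstar) ∧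
    (∀ k' : Fin K, ⟪hstar, w k'⟫ = Real.sqrt (EH * EW) *
      ((K : ℝ) / (K - 1) * (if k = k' then 1 else 0) - 1 / (K - 1))) := by
  have hK2 : (2:ℝ) ≤ (K:ℝ) := by exact_mod_cast hK
  have hK1 : (0:ℝ) < (K:ℝ) - 1 := by linarith
  set s : ℝ := Real.sqrt (EH * EW) with hs
  set r : ℝ := Real.sqrt (EH / EW) with hr
  have hr2 : r ^ 2 = EH / EW := Real.sq_sqrt (by positivity)
  have hrE : r * EW = s := by
    have h1 : (r * EW) ^ 2 = s ^ 2 := by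
      rw [mul_pow, hr2, hs, Real.sq_sqrt (by positivity)]
      field_simp
    calc r * EW = Real.sqrt ((r * EW) ^ 2) := by
          rw [Real.sqrt_sq (by positivity)]
      _ = Real.sqrt (s ^ 2) := by rw [h1]
      _ = s := Real.sqrt_sq (Real.sqrt_nonneg _)
  have hrs : r * s = EH := by
    have : r * s = r ^ 2 * EW := by rw [← hrE]; ring
    rw [this, hr2]; field_simp
  have hwkk : ⟪w k, w k⟫ = EW := by
    rw [hW k k, if_pos rfl]
    field_simp
  have hwknorm : ‖w k‖ = Real.sqrt EW := by
    rw [show Real.sqrt EW = Real.sqrt ⟪w k, w k⟫ by rw [hwkk],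
      real_inner_self_eq_norm_sq, Real.sqrt_sq (norm_nonneg _)]
  -- L rewritten
  have hSpos : ∀ h : EuclideanSpace ℝ (Fin d),
      0 < ∑ j : Fin K, Real.exp ⟪h, w j⟫ := fun h =>
    Finset.sum_pos (fun j _ => Real.exp_pos _) ⟨k, Finset.mem_univ k⟩
  have hL' : ∀ h, L h = Real.log (∑ j : Fin K, Real.exp ⟪h, w j⟫) - ⟪h, w k⟫ := by
    intro h
    rw [hL h, Real.log_div (Real.exp_ne_zero _) (ne_of_gt (hSpos h)), Real.log_exp]
    ring
  have hsum : ∀ h : EuclideanSpace ℝ (Fin d), ∑ j : Fin K, ⟪h, w j⟫ = 0 := by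
    intro h
    rw [← inner_sum, hWsum, inner_zero_right]
  have hcard : ((Finset.univ.erase k).card : ℝ) = (K:ℝ) - 1 := by
    rw [Finset.card_erase_of_mem (Finset.mem_univ k), Finset.card_univ, Fintype.card_fin]
    have : 1 ≤ K := by omega
    push_cast [this]
    ring
  set G : ℝ → ℝ := fun t =>
    Real.log (1 + ((K:ℝ) - 1) * Real.exp (-((K:ℝ) / ((K:ℝ) - 1)) * t)) with hG
  have hGpos : ∀ t, 0 < 1 + ((K:ℝ) - 1) * Real.exp (-((K:ℝ) / ((K:ℝ) - 1)) * t) := by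
    intro t
    have := Real.exp_pos (-((K:ℝ) / ((K:ℝ) - 1)) * t)
    nlinarith
  have hGanti : ∀ t1 t2 : ℝ, t1 < t2 → G t2 < G t1 := by
    intro t1 t2 h12
    apply Real.log_lt_log (hGpos t2)
    have hc : 0 < (K:ℝ) / ((K:ℝ) - 1) := by positivity
    have : Real.exp (-((K:ℝ) / ((K:ℝ) - 1)) * t2)
        < Real.exp (-((K:ℝ) / ((K:ℝ) - 1)) * t1) := by
      apply Real.exp_lt_exp.mpr
      nlinarith
    nlinarith
  have hXid : ∀ t : ℝ, Real.exp t + ((K:ℝ) - 1) * Real.exp (-t / ((K:ℝ) - 1))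
      = Real.exp t * (1 + ((K:ℝ) - 1) * Real.exp (-((K:ℝ) / ((K:ℝ) - 1)) * t)) := by
    intro t
    have h1 : Real.exp t * Real.exp (-((K:ℝ) / ((K:ℝ) - 1)) * t)
        = Real.exp (-t / ((K:ℝ) - 1)) := by
      rw [← Real.exp_add]
      congr 1
      field_simp
      ring
    linear_combination (1 - (K:ℝ)) * h1
  have hkey : ∀ h : EuclideanSpace ℝ (Fin d), G ⟪h, w k⟫ ≤ L h := by
    intro h
    set t : ℝ := ⟪h, w k⟫ with ht
    have hserase : ∑ j ∈ Finset.univ.erase k, ⟪h, w j⟫ = -t := by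
      have h0 := hsum h
      rw [← Finset.add_sum_erase _ _ (Finset.mem_univ k)] at h0
      linarith
    have hj := jensen_exp (Finset.univ.erase k) (fun j => ⟪h, w j⟫)
      (-t / ((K:ℝ) - 1)) (by rw [hserase, hcard]; field_simp)
    rw [hcard] at hj
    have hsplit : ∑ j : Fin K, Real.exp ⟪h, w j⟫
        = Real.exp t + ∑ j ∈ Finset.univ.erase k, Real.exp ⟪h, w j⟫ :=
      (Finset.add_sum_erase _ _ (Finset.mem_univ k)).symm
    have hS : Real.exp t * (1 + ((K:ℝ) - 1) * Real.exp (-((K:ℝ) / ((K:ℝ) - 1)) * t))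
        ≤ ∑ j : Fin K, Real.exp ⟪h, w j⟫ := by
      rw [hsplit, ← hXid]
      linarith
    have hlog := Real.log_le_log (by positivity) hS
    rw [Real.log_mul (Real.exp_ne_zero t) (ne_of_gt (hGpos t)), Real.log_exp] at hlog
    rw [hL' h]
    simp only [hG]
    linarith
  -- inner products with hstar
  have hik : ⟪hstar, w k⟫ = s := by
    rw [hhstar, real_inner_smul_left, hwkk]
    exact hrE
  have hij : ∀ j : Fin K, j ≠ k → ⟪hstar, w j⟫ = -s / ((K:ℝ) - 1) := by
    intro j hj
    rw [hhstar, real_inner_smul_left, hW k j, if_neg (fun hh => hj hh.symm)]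
    linear_combination (-1 / ((K:ℝ) - 1)) * hrE
  have hLstar : L hstar = G s := by
    rw [hL' hstar, hik]
    have h0 : ∑ j : Fin K, Real.exp ⟪hstar, w j⟫
        = Real.exp s + ((K:ℝ) - 1) * Real.exp (-s / ((K:ℝ) - 1)) := by
      rw [← Finset.add_sum_erase _ _ (Finset.mem_univ k), hik]
      congr 1
      rw [Finset.sum_congr rfl (fun j hj => by
        rw [hij j (Finset.ne_of_mem_erase hj)]), Finset.sum_const, nsmul_eq_mul, hcard]
    rw [h0, hXid, Real.log_mul (Real.exp_ne_zero s) (ne_of_gt (hGpos s)), Real.log_exp]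
    simp only [hG]
    ring
  have hbound : ∀ h : EuclideanSpace ℝ (Fin d), ‖h‖ ^ 2 ≤ EH → ⟪h, w k⟫ ≤ s := by
    intro h hh
    have h1 : ⟪h, w k⟫ ≤ ‖h‖ * ‖w k‖ := real_inner_le_norm h (w k)
    have h2 : ‖h‖ ≤ Real.sqrt EH := (Real.le_sqrt (norm_nonneg h) hEH.le).mpr hh
    have h3 : ‖h‖ * ‖w k‖ ≤ Real.sqrt EH * Real.sqrt EW := by
      rw [hwknorm]
      exact mul_le_mul_of_nonneg_right h2 (Real.sqrt_nonneg _)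
    rw [hs, Real.sqrt_mul hEH.le]
    linarith
  refine ⟨?_, ?_, ?_⟩
  · intro h hh
    have h1 := hbound h hh
    have h2 : G s ≤ G ⟪h, w k⟫ := by
      rcases lt_or_eq_of_le h1 with h3 | h3
      · exact (hGanti _ _ h3).le
      · rw [h3]
    rw [hLstar]
    linarith [hkey h]
  · intro h hh heq
    have h1 := hbound h hh
    have h2 : ⟪h, w k⟫ = s := by
      by_contra h3
      have h4 : ⟪h, w k⟫ < s := lt_of_le_of_ne h1 h3
      have h5 := hGanti _ _ h4
      have h6 := hkey h
      rw [heq, hLstar] at h6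
      linarith
    have hih : ⟪h, hstar⟫ = EH := by
      rw [hhstar, real_inner_smul_right, h2]
      exact hrs
    have hns : ‖hstar‖ ^ 2 = EH := by
      rw [← real_inner_self_eq_norm_sq, hhstar, real_inner_smul_left,
        real_inner_smul_right, hwkk]
      have : r * (r * EW) = r ^ 2 * EW := by ring
      rw [this, hr2]
      field_simp
    have hexp : ‖h - hstar‖ ^ 2 = ‖h‖ ^ 2 - 2 * ⟪h, hstar⟫ + ‖hstar‖ ^ 2 :=
      norm_sub_sq_real h hstar
    have h7 : ‖h - hstar‖ ^ 2 ≤ 0 := by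
      rw [hexp, hih, hns]
      linarith
    have h8 : ‖h - hstar‖ = 0 := by
      have := sq_nonneg ‖h - hstar‖
      have h9 : ‖h - hstar‖ ^ 2 = 0 := le_antisymm h7 this
      exact pow_eq_zero_iff (by norm_num) |>.mp h9
    have := norm_eq_zero.mp h8
    exact sub_eq_zero.mp this
  · intro k'
    rw [hhstar, real_inner_smul_left, hW k k', ← hrE]
    ring
end
end

section
/- In the constrained minimization of L_CE(h, W*) over ||h||² ≤ E_H with W* a fixed scaled simplex ETF, any minimizer h* must lie on the boundary, i.e., ||h*||² = E_H (the norm constraint is active). -/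
open scoped BigOperators RealInnerProductSpace

noncomputable section

theorem ce_constraint_active (d K : ℕ) (hK : 2 ≤ K)
    (EW EH : ℝ) (hEW : 0 < EW) (hEH : 0 < EH)
    (w : Fin K → EuclideanSpace ℝ (Fin d))
    (hW : ∀ i j, ⟪w i, w j⟫ =
      EW * ((K : ℝ) / (K - 1) * (if i = j then 1 else 0) - 1 / (K - 1)))
    (hWsum : ∑ i : Fin K, w i = 0)
    (k : Fin K)
    (L : EuclideanSpace ℝ (Fin d) → ℝ)
    (hL : ∀ h, L h =
      -Real.log (Real.exp ⟪h, w k⟫ / ∑ j : Fin K, Real.exp ⟪h, w j⟫))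
    (hstar : EuclideanSpace ℝ (Fin d)) (hball : ‖hstar‖ ^ 2 ≤ EH)
    (hmin : ∀ h : EuclideanSpace ℝ (Fin d), ‖h‖ ^ 2 ≤ EH → L hstar ≤ L h) :
    ‖hstar‖ ^ 2 = EH := by
  by_contra hne
  have hlt : ‖hstar‖ ^ 2 < EH := lt_of_le_of_ne hball hne
  have hK2 : (2:ℝ) ≤ (K:ℝ) := by exact_mod_cast hK
  have hKpos : (0:ℝ) < (K:ℝ) - 1 := by linarith
  have hwkk : ⟪w k, w k⟫ = EW := by
    have h := hW k k
    rw [if_pos rfl] at h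
    rw [h]
    field_simp
  have hwknorm : ‖w k‖ ^ 2 = EW := by
    rw [← real_inner_self_eq_norm_sq]; exact hwkk
  have hwkpos : 0 < ‖w k‖ := by
    nlinarith [norm_nonneg (w k)]
  have hltkj : ∀ j, j ≠ k → ⟪w k, w j⟫ < EW := by
    intro j hj
    rw [hW k j, if_neg (fun h => hj h.symm)]
    have h1 : 0 < EW / ((K:ℝ) - 1) := div_pos hEW hKpos
    have h2 : EW * ((K:ℝ) / ((K:ℝ) - 1) * 0 - 1 / ((K:ℝ) - 1)) = -(EW / ((K:ℝ)-1)) := by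
      ring
    rw [h2]; linarith
  have hsq : ‖hstar‖ < Real.sqrt EH := (Real.lt_sqrt (norm_nonneg _)).mpr hlt
  set t : ℝ := (Real.sqrt EH - ‖hstar‖) / ‖w k‖ with ht
  have htpos : 0 < t := div_pos (by linarith) hwkpos
  have hhb : ‖hstar + t • w k‖ ^ 2 ≤ EH := by
    have h1 : ‖hstar + t • w k‖ ≤ Real.sqrt EH := by
      calc ‖hstar + t • w k‖ ≤ ‖hstar‖ + ‖t • w k‖ := norm_add_le _ _
        _ = ‖hstar‖ + t * ‖w k‖ := by
            rw [norm_smul, Real.norm_of_nonneg htpos.le]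
        _ = Real.sqrt EH := by
            rw [ht, div_mul_cancel₀ _ (ne_of_gt hwkpos)]; ring
    calc ‖hstar + t • w k‖ ^ 2 ≤ (Real.sqrt EH) ^ 2 :=
          pow_le_pow_left₀ (norm_nonneg _) h1 2
      _ = EH := Real.sq_sqrt hEH.le
  have hin : ∀ j, ⟪hstar + t • w k, w j⟫ = ⟪hstar, w j⟫ + t * ⟪w k, w j⟫ := by
    intro j; rw [inner_add_left, real_inner_smul_left]
  have hex : ∃ j : Fin K, j ≠ k := by
    have h1 : 1 < Fintype.card (Fin K) := by simp; omega
    exact Fintype.exists_ne_of_one_lt_card h1 k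
  have key : ∑ j : Fin K, Real.exp (⟪hstar, w j⟫ + t * ⟪w k, w j⟫)
      < ∑ j : Fin K, Real.exp (⟪hstar, w j⟫ + t * EW) := by
    apply Finset.sum_lt_sum
    · intro j _
      apply Real.exp_le_exp.mpr
      have hle : ⟪w k, w j⟫ ≤ EW := by
        by_cases hj : j = k
        · subst hj; rw [hwkk]
        · exact (hltkj j hj).le
      nlinarith
    · obtain ⟨j, hj⟩ := hex
      refine ⟨j, Finset.mem_univ j, ?_⟩
      apply Real.exp_lt_exp.mpr
      have := hltkj j hj
      nlinarith
  have hS0pos : 0 < ∑ j : Fin K, Real.exp ⟪hstar, w j⟫ :=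
    Finset.sum_pos (fun j _ => Real.exp_pos _) ⟨k, Finset.mem_univ k⟩
  have hS1pos : 0 < ∑ j : Fin K, Real.exp (⟪hstar, w j⟫ + t * ⟪w k, w j⟫) :=
    Finset.sum_pos (fun j _ => Real.exp_pos _) ⟨k, Finset.mem_univ k⟩
  -- rewrite the right sum
  have hrhs : ∑ j : Fin K, Real.exp (⟪hstar, w j⟫ + t * EW)
      = Real.exp (t * EW) * ∑ j : Fin K, Real.exp ⟪hstar, w j⟫ := by
    rw [Finset.mul_sum]
    apply Finset.sum_congr rfl
    intro j _
    rw [Real.exp_add]; ring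
  have hlog : Real.log (∑ j : Fin K, Real.exp (⟪hstar, w j⟫ + t * ⟪w k, w j⟫))
      < t * EW + Real.log (∑ j : Fin K, Real.exp ⟪hstar, w j⟫) := by
    have h1 := Real.log_lt_log hS1pos key
    rw [hrhs, Real.log_mul (Real.exp_ne_zero _) (ne_of_gt hS0pos),
      Real.log_exp] at h1
    exact h1
  have hL1 : L (hstar + t • w k)
      = Real.log (∑ j : Fin K, Real.exp (⟪hstar, w j⟫ + t * ⟪w k, w j⟫))
        - (⟪hstar, w k⟫ + t * EW) := by
    rw [hL]
    simp only [hin]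
    rw [Real.log_div (Real.exp_ne_zero _) (ne_of_gt hS1pos), Real.log_exp, hwkk]
    ring
  have hL0 : L hstar
      = Real.log (∑ j : Fin K, Real.exp ⟪hstar, w j⟫) - ⟪hstar, w k⟫ := by
    rw [hL]
    rw [Real.log_div (Real.exp_ne_zero _) (ne_of_gt hS0pos), Real.log_exp]
    ring
  have hcontra := hmin (hstar + t • w k) hhb
  rw [hL1, hL0] at hcontra
  linarith
end
end

section
/- Let h* be a critical point of the Lagrangian of min L_CE(h, W*) s.t. ||h||² ≤ E_H with multiplier μ > 0 and W* a scaled simplex ETF. Then the inner products ⟨h*, w_j*⟩ are equal for all j ≠ k and the softmax probabilities satisfy p_j(h*) = p_{j'}(h*) for all j, j' ≠ k. -/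
open scoped BigOperators RealInnerProductSpace

noncomputable section

theorem ce_stationary_symmetry (d K : ℕ) (hK : 2 ≤ K)
    (EW : ℝ) (hEW : 0 < EW) (N : ℝ) (hN : 0 < N)
    (w : Fin K → EuclideanSpace ℝ (Fin d))
    (hW : ∀ i j, ⟪w i, w j⟫ =
      EW * ((K : ℝ) / (K - 1) * (if i = j then 1 else 0) - 1 / (K - 1)))
    (hWsum : ∑ i : Fin K, w i = 0)
    (k : Fin K) (μ : ℝ) (hμ : 0 < μ)
    (hstar : EuclideanSpace ℝ (Fin d))
    (p : Fin K → ℝ)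
    (hp : ∀ j, p j = Real.exp ⟪hstar, w j⟫ / ∑ j' : Fin K, Real.exp ⟪hstar, w j'⟫)
    (hstat : -((1 - p k) / N) • w k +
      (1 / N) • (∑ j ∈ Finset.univ.erase k, p j • w j) + (2 * μ) • hstar = 0) :
    (∀ j ∈ Finset.univ.erase k, ∀ j' ∈ Finset.univ.erase k,
      ⟪hstar, w j⟫ = ⟪hstar, w j'⟫) ∧
    (∀ j ∈ Finset.univ.erase k, ∀ j' ∈ Finset.univ.erase k, p j = p j') := by
  have hK1 : (1:ℝ) < (K:ℝ) := by exact_mod_cast hK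
  have hKm1 : (0:ℝ) < (K:ℝ) - 1 := by linarith
  have hKpos : (0:ℝ) < (K:ℝ) := by linarith
  set Z : ℝ := ∑ j' : Fin K, Real.exp ⟪hstar, w j'⟫ with hZdef
  have hZpos : 0 < Z := Finset.sum_pos (fun i _ => Real.exp_pos _) ⟨k, Finset.mem_univ k⟩
  have hpsum : ∑ j : Fin K, p j = 1 := by
    have : ∑ j : Fin K, p j = (∑ j : Fin K, Real.exp ⟪hstar, w j⟫) / Z := by
      rw [Finset.sum_div]; exact Finset.sum_congr rfl fun j _ => hp j
    rw [this, ← hZdef, div_self (ne_of_gt hZpos)]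
  have hpsum' : ∑ j ∈ Finset.univ.erase k, p j = 1 - p k := by
    have h2 := Finset.add_sum_erase Finset.univ p (Finset.mem_univ k)
    rw [hpsum] at h2
    linarith
  -- key scalar equation for each j ≠ k
  have key : ∀ j ∈ Finset.univ.erase k,
      2 * μ * (N * ((K:ℝ) - 1)) * Z * ⟪hstar, w j⟫
        + EW * (K:ℝ) * Real.exp ⟪hstar, w j⟫ = 0 := by
    intro j hj
    have hjk : j ≠ k := Finset.ne_of_mem_erase hj
    have h0 : ⟪(-((1 - p k) / N) • w k +
        (1 / N) • (∑ j' ∈ Finset.univ.erase k, p j' • w j') + (2 * μ) • hstar :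
        EuclideanSpace ℝ (Fin d)), w j⟫ = (0:ℝ) := by
      rw [hstat]; exact inner_zero_left _
    rw [inner_add_left, inner_add_left, real_inner_smul_left, real_inner_smul_left,
        real_inner_smul_left, sum_inner] at h0
    have hsum : ∑ j' ∈ Finset.univ.erase k, ⟪p j' • w j', w j⟫
        = EW * (K:ℝ) / ((K:ℝ) - 1) * p j - EW / ((K:ℝ) - 1) * (1 - p k) := by
      have hterm : ∀ j' ∈ Finset.univ.erase k, ⟪p j' • w j', w j⟫
          = (EW * (K:ℝ) / ((K:ℝ) - 1)) * (if j' = j then p j' else 0)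
            - EW / ((K:ℝ) - 1) * p j' := by
        intro j' _
        rw [real_inner_smul_left, hW j' j]
        by_cases h : j' = j <;> simp [h] <;> ring
      rw [Finset.sum_congr rfl hterm, Finset.sum_sub_distrib, ← Finset.mul_sum,
        ← Finset.mul_sum, Finset.sum_ite_eq' (Finset.univ.erase k) j p, hpsum']
      simp [hj]
    rw [hsum, hW k j, if_neg (Ne.symm hjk)] at h0
    have hNne : N ≠ 0 := ne_of_gt hN
    have hKne : (K:ℝ) - 1 ≠ 0 := ne_of_gt hKm1
    set a : ℝ := ⟪hstar, w j⟫ with ha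
    field_simp at h0
    have hZne : Z ≠ 0 := ne_of_gt hZpos
    have hNKne : N * ((K:ℝ) - 1) ≠ 0 := mul_ne_zero hNne hKne
    have h1 : EW * (K:ℝ) * p j + 2 * μ * a * (N * ((K:ℝ) - 1)) = 0 := by
      apply mul_right_cancel₀ hNKne
      linear_combination (N * ((K:ℝ) - 1)) * h0
    have hexp : Real.exp a = p j * Z := by
      rw [hp j, ← ha, div_mul_cancel₀ _ hZne]
    linear_combination Z * h1 + EW * (K:ℝ) * hexp
  -- strict monotonicity
  have hmono : StrictMono (fun x : ℝ =>
      2 * μ * (N * ((K:ℝ) - 1)) * Z * x + EW * (K:ℝ) * Real.exp x) := by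
    intro x y hxy
    have hA : (0:ℝ) < 2 * μ * (N * ((K:ℝ) - 1)) * Z := by positivity
    have hB : (0:ℝ) < EW * (K:ℝ) := by positivity
    have h1 := mul_lt_mul_of_pos_left hxy hA
    have h2 := mul_lt_mul_of_pos_left (Real.exp_lt_exp.2 hxy) hB
    simp only []
    linarith
  have hinner : ∀ j ∈ Finset.univ.erase k, ∀ j' ∈ Finset.univ.erase k,
      ⟪hstar, w j⟫ = ⟪hstar, w j'⟫ := by
    intro j hj j' hj'
    have := (key j hj).trans (key j' hj').symm
    exact hmono.injective this
  refine ⟨hinner, fun j hj j' hj' => ?_⟩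
  rw [hp j, hp j', hinner j hj j' hj']
end
end

section
/- Let ||h||² = E_H, ||w*||² = E_W, and h* = √(E_H/E_W) w*. One projected gradient step of the DR loss h⁺ = Proj_{E_H}(h - γ(cos∠(h,w*) - 1)w*) with step size γ = √(E_H/E_W) satisfies ||h⁺ - h*||² ≤ ((1 + cos∠(h,w*))/2)·||h - h*||², provided cos∠(h,w*) ≥ 0. -/
open scoped BigOperators RealInnerProductSpace

noncomputable section

/-- Orthogonal projection onto the ball `{x : ‖x‖² ≤ EH}`. -/
def projBall {d : ℕ} (EH : ℝ) (x : EuclideanSpace ℝ (Fin d)) :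
    EuclideanSpace ℝ (Fin d) :=
  if ‖x‖ ^ 2 ≤ EH then x else (Real.sqrt EH / ‖x‖) • x

lemma projBall_nonexpansive {d : ℕ} (EH : ℝ) (hEH : 0 ≤ EH)
    (y z : EuclideanSpace ℝ (Fin d)) (hz : ‖z‖ ^ 2 ≤ EH) :
    ‖projBall EH y - z‖ ^ 2 ≤ ‖y - z‖ ^ 2 := by
  unfold projBall
  split_ifs with hy
  · exact le_refl _
  · push_neg at hy
    have hy0 : 0 < ‖y‖ := by
      by_contra hc
      push_neg at hc
      have : ‖y‖ = 0 := le_antisymm hc (norm_nonneg _)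
      nlinarith
    set t : ℝ := Real.sqrt EH / ‖y‖ with ht
    have hsq : Real.sqrt EH ^ 2 = EH := Real.sq_sqrt hEH
    have hsle : Real.sqrt EH ≤ ‖y‖ := by nlinarith [Real.sqrt_nonneg EH, norm_nonneg y]
    have ht0 : 0 ≤ t := div_nonneg (Real.sqrt_nonneg EH) (norm_nonneg y)
    have ht1 : t ≤ 1 := (div_le_one hy0).mpr hsle
    have hty : t * ‖y‖ = Real.sqrt EH := div_mul_cancel₀ _ (ne_of_gt hy0)
    have hzle : ‖z‖ ≤ Real.sqrt EH := by
      nlinarith [norm_nonneg z, Real.sqrt_nonneg EH]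
    have hinner : ⟪y, z⟫ ≤ ‖y‖ * Real.sqrt EH :=
      (real_inner_le_norm y z).trans (by nlinarith [norm_nonneg y])
    have e1 : ‖t • y - z‖ ^ 2 = t ^ 2 * ‖y‖ ^ 2 - 2 * (t * ⟪y, z⟫) + ‖z‖ ^ 2 := by
      rw [@norm_sub_sq_real, norm_smul, real_inner_smul_left]
      simp [abs_of_nonneg ht0]
      ring
    have e2 : ‖y - z‖ ^ 2 = ‖y‖ ^ 2 - 2 * ⟪y, z⟫ + ‖z‖ ^ 2 := by
      rw [@norm_sub_sq_real]
    nlinarith [mul_nonneg (sub_nonneg.mpr ht1) (sub_nonneg.mpr ht1), norm_nonneg y]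

theorem dr_step_contraction (d : ℕ) (EW EH : ℝ) (hEW : 0 < EW) (hEH : 0 < EH)
    (w : EuclideanSpace ℝ (Fin d)) (hw : ‖w‖ ^ 2 = EW)
    (h : EuclideanSpace ℝ (Fin d)) (hh : ‖h‖ ^ 2 = EH)
    (cos : ℝ) (hcos : cos = ⟪h, w⟫ / Real.sqrt (EH * EW)) (hcos0 : 0 ≤ cos)
    (hstar : EuclideanSpace ℝ (Fin d))
    (hhstar : hstar = Real.sqrt (EH / EW) • w)
    (γ : ℝ) (hγ : γ = Real.sqrt (EH / EW))
    (hplus : EuclideanSpace ℝ (Fin d))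
    (hstep : hplus = projBall EH (h - γ • ((cos - 1) • w))) :
    ‖hplus - hstar‖ ^ 2 ≤ ((1 + cos) / 2) * ‖h - hstar‖ ^ 2 := by
  have hγ0 : 0 ≤ γ := hγ ▸ Real.sqrt_nonneg _
  have hγsq : γ ^ 2 = EH / EW := by rw [hγ]; exact Real.sq_sqrt (le_of_lt (div_pos hEH hEW))
  -- ‖hstar‖² = EH
  have hns : ‖hstar‖ ^ 2 = EH := by
    rw [hhstar, norm_smul, mul_pow, Real.norm_eq_abs, sq_abs, ← hγ, hγsq, hw]
    field_simp
  -- √(EH*EW) = γ * EW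
  have hsqrtmul : Real.sqrt (EH * EW) = γ * EW := by
    have e : EH * EW = (EH / EW) * EW ^ 2 := by field_simp
    rw [hγ, e, Real.sqrt_mul (div_pos hEH hEW).le, Real.sqrt_sq hEW.le]
  -- ⟪h, hstar⟫ = cos * EH
  have hinner_hw : ⟪h, w⟫ = cos * (γ * EW) := by
    rw [hcos, ← hsqrtmul]
    have : Real.sqrt (EH * EW) ≠ 0 := by
      positivity
    field_simp
  have hinner_hs : ⟪h, hstar⟫ = cos * EH := by
    rw [hhstar, real_inner_smul_right, ← hγ, hinner_hw]
    have : γ * (cos * (γ * EW)) = cos * (γ ^ 2 * EW) := by ring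
    rw [this, hγsq]
    field_simp
  -- the pre-projection point
  set y : EuclideanSpace ℝ (Fin d) := h - γ • ((cos - 1) • w) with hy
  have hy_eq : y - hstar = h - cos • hstar := by
    rw [hy, hhstar, ← hγ]
    module
  have hyn : ‖y - hstar‖ ^ 2 = EH * (1 - cos ^ 2) := by
    rw [hy_eq, @norm_sub_sq_real, real_inner_smul_right, norm_smul, hinner_hs, hh]
    rw [mul_pow, Real.norm_eq_abs, sq_abs, hns]
    ring
  have hhn : ‖h - hstar‖ ^ 2 = 2 * EH * (1 - cos) := by
    rw [@norm_sub_sq_real, hinner_hs, hh, hns]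
    ring
  have hne := projBall_nonexpansive EH hEH.le y hstar (le_of_eq hns)
  rw [← hstep] at hne
  rw [hhn]
  calc ‖hplus - hstar‖ ^ 2 ≤ ‖y - hstar‖ ^ 2 := hne
    _ = EH * (1 - cos ^ 2) := hyn
    _ = (1 + cos) / 2 * (2 * EH * (1 - cos)) := by ring
end
end
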